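/- Assume 0 < h < 1 and 2/h ∉ ℤ, set n₀ = ⌊2/h⌋, and let L : (0,∞) → ℕ satisfy L(β) ≥ 2(n₀+2) for all β, lim_{β→∞} L(β)·( e^{−[(n₀+1)h−2]β} + e^{−hβ} ) = 0 and lim_{β→∞} L(β)⁴·e^{−(2−h)β} = 0. For each β, working on Ω_{L(β)}: lim_{β→∞} Cap_β({-1}, {+1}) / Cap_β({-1}, {0, +1}) = 1. -/

import Mathlib

open Classical Finset Filter Topology

noncomputable section

namespace BC

/-- Sites of the two-dimensional discrete torus of side `L`. -/
abbrev Site (L : ℕ) := ZMod L × ZMod L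

/-- Spin configurations: a spin `s : Fin 3` at a site encodes the value `s - 1 ∈ {-1,0,1}`. -/
abbrev Cfg (L : ℕ) := Site L → Fin 3

/-- The spin value in `{-1, 0, 1}` encoded by an element of `Fin 3`. -/
def sval (s : Fin 3) : ℤ := (s : ℤ) - 1

/-- The critical length `n₀ = ⌊2/h⌋`. -/
def n0 (h : ℝ) : ℕ := ⌊(2 : ℝ) / h⌋₊

/-- The configuration `-1` with all spins equal to `-1`. -/
def cminus (L : ℕ) : Cfg L := fun _ => 0

/-- The configuration `0` with all spins equal to `0`. -/
def czero (L : ℕ) : Cfg L := fun _ => 1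

/-- The configuration `+1` with all spins equal to `+1`. -/
def cplus (L : ℕ) : Cfg L := fun _ => 2

/-- Nearest-neighbour relation on the torus. -/
def nbr (L : ℕ) (x y : Site L) : Prop :=
  y = x + (1, 0) ∨ y = x - (1, 0) ∨ y = x + (0, 1) ∨ y = x - (0, 1)

/-- The four nearest neighbours of a site, as a finite set. -/
def nbrFinset (L : ℕ) (x : Site L) : Finset (Site L) :=
  {x + (1, 0), x - (1, 0), x + (0, 1), x - (0, 1)}

/-- The torus viewed as a simple graph with nearest-neighbour adjacency. -/
def torusGraph (L : ℕ) : SimpleGraph (Site L) where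
  Adj x y := x ≠ y ∧ nbr L x y
  symm := by
    refine ⟨?_⟩
    rintro x y ⟨hne, hn⟩
    refine ⟨hne.symm, ?_⟩
    unfold nbr at hn ⊢
    rcases hn with h1 | h1 | h1 | h1 <;> subst h1 <;> simp
  loopless := by refine ⟨?_⟩; rintro x ⟨hne, -⟩; exact hne rfl

/-- The `s × t` rectangle of sites with lower-left corner `a`. -/
def rect (L : ℕ) (a : Site L) (s t : ℕ) : Finset (Site L) :=
  (Finset.range s ×ˢ Finset.range t).image
    (fun p => (a.1 + (p.1 : ZMod L), a.2 + (p.2 : ZMod L)))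

/-- The four corners of the `s × t` rectangle with lower-left corner `a`. -/
def corners (L : ℕ) (a : Site L) (s t : ℕ) : Finset (Site L) :=
  {(a.1, a.2), (a.1 + ((s - 1 : ℕ) : ZMod L), a.2),
   (a.1, a.2 + ((t - 1 : ℕ) : ZMod L)),
   (a.1 + ((s - 1 : ℕ) : ZMod L), a.2 + ((t - 1 : ℕ) : ZMod L))}

/-- `S` is an `n × (n+1)` rectangle (in either orientation). -/
def isCritRect (L n : ℕ) (S : Finset (Site L)) : Prop :=
  ∃ a : Site L, S = rect L a n (n + 1) ∨ S = rect L a (n + 1) n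

/-- `S` is an `n × (n+1)` rectangle plus an extra site attached to a longest side. -/
def critRl (L n : ℕ) (S : Finset (Site L)) : Prop :=
  ∃ (a : Site L) (i : ℕ), i ≤ n ∧
    (S = insert (a.1 + (i : ZMod L), a.2 - 1) (rect L a (n + 1) n) ∨
     S = insert (a.1 + (i : ZMod L), a.2 + (n : ZMod L)) (rect L a (n + 1) n) ∨
     S = insert (a.1 - 1, a.2 + (i : ZMod L)) (rect L a n (n + 1)) ∨
     S = insert (a.1 + (n : ZMod L), a.2 + (i : ZMod L)) (rect L a n (n + 1)))

/-- `S` is an `n × (n+1)` rectangle plus an extra site attached to a longest side,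
next to a corner of the rectangle. -/
def critRlc (L n : ℕ) (S : Finset (Site L)) : Prop :=
  ∃ (a : Site L) (i : ℕ), i ≤ n ∧ (i = 0 ∨ i = n) ∧
    (S = insert (a.1 + (i : ZMod L), a.2 - 1) (rect L a (n + 1) n) ∨
     S = insert (a.1 + (i : ZMod L), a.2 + (n : ZMod L)) (rect L a (n + 1) n) ∨
     S = insert (a.1 - 1, a.2 + (i : ZMod L)) (rect L a n (n + 1)) ∨
     S = insert (a.1 + (n : ZMod L), a.2 + (i : ZMod L)) (rect L a n (n + 1)))

/-- `S` is an `n × (n+1)` rectangle plus an extra site attached to a longest side,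
away from the corners of the rectangle. -/
def critRli (L n : ℕ) (S : Finset (Site L)) : Prop :=
  ∃ (a : Site L) (i : ℕ), 0 < i ∧ i < n ∧
    (S = insert (a.1 + (i : ZMod L), a.2 - 1) (rect L a (n + 1) n) ∨
     S = insert (a.1 + (i : ZMod L), a.2 + (n : ZMod L)) (rect L a (n + 1) n) ∨
     S = insert (a.1 - 1, a.2 + (i : ZMod L)) (rect L a n (n + 1)) ∨
     S = insert (a.1 + (n : ZMod L), a.2 + (i : ZMod L)) (rect L a n (n + 1)))

/-- `S` is an `n × (n+1)` rectangle plus an extra site attached to a shortest side. -/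
def critRs (L n : ℕ) (S : Finset (Site L)) : Prop :=
  ∃ (a : Site L) (j : ℕ), j < n ∧
    (S = insert (a.1 - 1, a.2 + (j : ZMod L)) (rect L a (n + 1) n) ∨
     S = insert (a.1 + ((n + 1 : ℕ) : ZMod L), a.2 + (j : ZMod L)) (rect L a (n + 1) n) ∨
     S = insert (a.1 + (j : ZMod L), a.2 - 1) (rect L a n (n + 1)) ∨
     S = insert (a.1 + (j : ZMod L), a.2 + ((n + 1 : ℕ) : ZMod L)) (rect L a n (n + 1)))

/-- `S` is an `n × (n+1)` rectangle plus two mutually adjacent extra sites, each attached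
to a longest side. -/
def critRl2 (L n : ℕ) (S : Finset (Site L)) : Prop :=
  ∃ (a : Site L) (i : ℕ), i + 1 ≤ n ∧
    (S = rect L a (n + 1) n ∪
        {(a.1 + (i : ZMod L), a.2 - 1), (a.1 + (i : ZMod L) + 1, a.2 - 1)} ∨
     S = rect L a (n + 1) n ∪
        {(a.1 + (i : ZMod L), a.2 + (n : ZMod L)), (a.1 + (i : ZMod L) + 1, a.2 + (n : ZMod L))} ∨
     S = rect L a n (n + 1) ∪
        {(a.1 - 1, a.2 + (i : ZMod L)), (a.1 - 1, a.2 + (i : ZMod L) + 1)} ∨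
     S = rect L a n (n + 1) ∪
        {(a.1 + (n : ZMod L), a.2 + (i : ZMod L)), (a.1 + (n : ZMod L), a.2 + (i : ZMod L) + 1)})

section

variable (L : ℕ) [NeZero L]

/-- The Blume-Capel Hamiltonian with zero chemical potential and magnetic field `h`. -/
def ham (h : ℝ) (σ : Cfg L) : ℝ :=
  (∑ x : Site L,
     (((sval (σ (x + (1, 0))) : ℝ) - (sval (σ x) : ℝ)) ^ 2 +
      ((sval (σ (x + (0, 1))) : ℝ) - (sval (σ x) : ℝ)) ^ 2)) -
  h * ∑ x : Site L, (sval (σ x) : ℝ)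

/-- The set `A(σ)` of sites where the spin differs from `-1`. -/
def Asites (σ : Cfg L) : Finset (Site L) := univ.filter fun x => σ x ≠ 0

/-- `N(σ)`, the number of spins different from `-1`. -/
def Nsz (σ : Cfg L) : ℕ := (Asites L σ).card

/-- The set of sites where the spin differs from `0`. -/
def A0sites (σ : Cfg L) : Finset (Site L) := univ.filter fun x => σ x ≠ 1

/-- `σ^{x,+}` : flip the spin at `x` by `+1 mod 3`. -/
def flipUp (σ : Cfg L) (x : Site L) : Cfg L := Function.update σ x (σ x + 1)

/-- `σ^{x,-}` : flip the spin at `x` by `-1 mod 3`. -/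
def flipDown (σ : Cfg L) (x : Site L) : Cfg L := Function.update σ x (σ x - 1)

/-- Metropolis jump rate. -/
def rate (h β : ℝ) (σ τ : Cfg L) : ℝ := Real.exp (-β * max (ham L h τ - ham L h σ) 0)

/-- Holding rate `λ_β`. -/
def lam (h β : ℝ) (σ : Cfg L) : ℝ :=
  ∑ x : Site L, (rate L h β σ (flipUp L σ x) + rate L h β σ (flipDown L σ x))

/-- One-step average of `u` under the jump probabilities `p_β = R_β/λ_β`. -/
def avg (h β : ℝ) (u : Cfg L → ℝ) (σ : Cfg L) : ℝ :=
  (∑ x : Site L,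
     (rate L h β σ (flipUp L σ x) * u (flipUp L σ x) +
      rate L h β σ (flipDown L σ x) * u (flipDown L σ x))) / lam L h β σ

/-- `u` is harmonic (w.r.t. the jump probabilities `p_β`) on `D`. -/
def harmOn (h β : ℝ) (u : Cfg L → ℝ) (D : Set (Cfg L)) : Prop :=
  ∀ η ∈ D, u η = avg L h β u η

/-- Unnormalised Gibbs weight `e^{-β ℍ(σ)}`. -/
def gw (h β : ℝ) (σ : Cfg L) : ℝ := Real.exp (-β * ham L h σ)

/-- Two configurations differ at exactly one site. -/
def oneDiff (σ τ : Cfg L) : Prop := (univ.filter fun x => σ x ≠ τ x).card = 1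

/-- Dirichlet form of the chain reflected in `V`. -/
def dirV (h β : ℝ) (V : Set (Cfg L)) (f : Cfg L → ℝ) : ℝ :=
  (1 / 2) * ∑ σ : Cfg L, ∑ τ : Cfg L,
    if σ ∈ V ∧ τ ∈ V ∧ oneDiff L σ τ
    then min (gw L h β σ) (gw L h β τ) * (f τ - f σ) ^ 2 else 0

/-- Capacity (via the Dirichlet principle) for the chain reflected in `V`. -/
def capV (h β : ℝ) (V A B : Set (Cfg L)) : ℝ :=
  sInf { e : ℝ | ∃ f : Cfg L → ℝ, (∀ σ, 0 ≤ f σ ∧ f σ ≤ 1) ∧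
        (∀ σ ∈ A, f σ = 1) ∧ (∀ σ ∈ B, f σ = 0) ∧ e = dirV L h β V f }

/-- Dirichlet form of the full chain. -/
def dirForm (h β : ℝ) (f : Cfg L → ℝ) : ℝ :=
  (1 / 2) * ∑ σ : Cfg L, ∑ x : Site L,
    (min (gw L h β σ) (gw L h β (flipUp L σ x)) * (f (flipUp L σ x) - f σ) ^ 2 +
     min (gw L h β σ) (gw L h β (flipDown L σ x)) * (f (flipDown L σ x) - f σ) ^ 2)

/-- Capacity via the Dirichlet variational principle. -/
def capa (h β : ℝ) (A B : Set (Cfg L)) : ℝ :=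
  sInf { e : ℝ | ∃ f : Cfg L → ℝ, (∀ σ, 0 ≤ f σ ∧ f σ ≤ 1) ∧
        (∀ σ ∈ A, f σ = 1) ∧ (∀ σ ∈ B, f σ = 0) ∧ e = dirForm L h β f }

/-- Holding rate of the chain reflected in `V`. -/
def lamV (h β : ℝ) (V : Set (Cfg L)) (σ : Cfg L) : ℝ :=
  ∑ x : Site L,
    ((if flipUp L σ x ∈ V then rate L h β σ (flipUp L σ x) else 0) +
     (if flipDown L σ x ∈ V then rate L h β σ (flipDown L σ x) else 0))

/-- One-step average for the chain reflected in `V`. -/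
def avgV (h β : ℝ) (V : Set (Cfg L)) (u : Cfg L → ℝ) (σ : Cfg L) : ℝ :=
  (∑ x : Site L,
    ((if flipUp L σ x ∈ V then rate L h β σ (flipUp L σ x) * u (flipUp L σ x) else 0) +
     (if flipDown L σ x ∈ V then rate L h β σ (flipDown L σ x) * u (flipDown L σ x) else 0))) /
  lamV L h β V σ

/-- `R` : `0`-spins forming an `n × (n+1)` rectangle in a sea of `-1`-spins. -/
def setR (n : ℕ) : Set (Cfg L) :=
  {σ | (∀ x, σ x ≠ 2) ∧ isCritRect L n (Asites L σ)}

/-- `B` : configurations with exactly `n(n+1)` spins different from `-1`. -/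
def setB (n : ℕ) : Set (Cfg L) := {σ | Nsz L σ = n * (n + 1)}

/-- `R⁺` : an `n × (n+1)` rectangle of `0`-spins plus one extra spin (`0` or `+1`)
outside the rectangle, in a sea of `-1`-spins. -/
def setRplus (n : ℕ) : Set (Cfg L) :=
  {σ | ∃ (S : Finset (Site L)) (z : Site L), isCritRect L n S ∧ z ∉ S ∧
       Asites L σ = insert z S ∧ ∀ x ∈ S, σ x = 1}

/-- `Rᵃ` : an `n × (n+1)` rectangle of `0`-spins plus one extra `0`-spin attached to the
rectangle, in a sea of `-1`-spins. -/
def setRa (n : ℕ) : Set (Cfg L) :=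
  {σ | ∃ (S : Finset (Site L)) (z : Site L), isCritRect L n S ∧ z ∉ S ∧
       Asites L σ = insert z S ∧ (∀ x ∈ S, σ x = 1) ∧ σ z = 1 ∧ ∃ y ∈ S, nbr L z y}

/-- The valley `V₋₁` of the configuration `-1`. -/
def valleyM (n : ℕ) : Set (Cfg L) := {σ | Nsz L σ ≤ n * (n + 1)} ∪ setRplus L n

/-- `B⁺`, the boundary of the valley of `-1`. -/
def setBplus (n : ℕ) : Set (Cfg L) := (setB L n \ setR L n) ∪ setRplus L n

/-- `Rˡ` : critical droplet with the protuberance attached to a longest side. -/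
def setRl (n : ℕ) : Set (Cfg L) :=
  {σ | (∀ x, σ x ≠ 2) ∧ critRl L n (Asites L σ) ∧ Nsz L σ = n * (n + 1) + 1}

/-- `Rˡᶜ` : protuberance attached to a longest side next to a corner. -/
def setRlc (n : ℕ) : Set (Cfg L) :=
  {σ | (∀ x, σ x ≠ 2) ∧ critRlc L n (Asites L σ) ∧ Nsz L σ = n * (n + 1) + 1}

/-- `Rˡⁱ` : protuberance attached to a longest side away from the corners. -/
def setRli (n : ℕ) : Set (Cfg L) :=
  {σ | (∀ x, σ x ≠ 2) ∧ critRli L n (Asites L σ) ∧ Nsz L σ = n * (n + 1) + 1}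

/-- `Rˢ` : protuberance attached to a shortest side. -/
def setRs (n : ℕ) : Set (Cfg L) :=
  {σ | (∀ x, σ x ≠ 2) ∧ critRs L n (Asites L σ) ∧ Nsz L σ = n * (n + 1) + 1}

/-- `Rˡ₀` : critical droplet of `+1`-spins in a sea of `0`-spins, protuberance on a
longest side. -/
def setRl0 (n : ℕ) : Set (Cfg L) :=
  {σ | (∀ x, σ x ≠ 0) ∧ critRl L n (A0sites L σ) ∧ (A0sites L σ).card = n * (n + 1) + 1}

/-- The energy `Γ_c` of a critical droplet. -/
def GammaC (h : ℝ) : ℝ :=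
  4 * ((n0 h : ℝ) + 1) - h * (((n0 h * (n0 h + 1) + 1 : ℕ) : ℝ) - (L : ℝ) ^ 2)

/-- `δ₁(β) = e^{-hβ} + |Λ|^{1/2} e^{-(2-h)β} + |Λ| e^{-(4-h)β}`. -/
def delta1 (h β : ℝ) : ℝ :=
  Real.exp (-h * β) + (L : ℝ) * Real.exp (-(2 - h) * β) +
    (L : ℝ) ^ 2 * Real.exp (-(4 - h) * β)

/-- `δ₅(β) = e^{-[(n₀+1)h-2]β} + e^{-hβ} + |Λ|^{3/2} e^{-(2-h)β}`. -/
def delta5 (h β : ℝ) : ℝ :=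
  Real.exp (-(((n0 h : ℝ) + 1) * h - 2) * β) + Real.exp (-h * β) +
    (L : ℝ) ^ 3 * Real.exp (-(2 - h) * β)

/-- `δ(β) = |Λ|^{1/2} e^{-[(n₀+1)h-2]β} + |Λ|^{1/2} e^{-hβ} + |Λ|² e^{-(2-h)β}`. -/
def deltaP (h β : ℝ) : ℝ :=
  (L : ℝ) * Real.exp (-(((n0 h : ℝ) + 1) * h - 2) * β) + (L : ℝ) * Real.exp (-h * β) +
    (L : ℝ) ^ 4 * Real.exp (-(2 - h) * β)

end

end BC
namespace BCProof
open BC Finset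

variable {L : ℕ} [NeZero L] {h β : ℝ}

lemma gw_pos (σ : Cfg L) : 0 < gw L h β σ := Real.exp_pos _

lemma min_gw_nonneg (σ τ : Cfg L) : 0 ≤ min (gw L h β σ) (gw L h β τ) :=
  le_min (gw_pos σ).le (gw_pos τ).le

lemma dirForm_nonneg (f : Cfg L → ℝ) : 0 ≤ dirForm L h β f := by
  unfold dirForm
  refine mul_nonneg (by norm_num) (Finset.sum_nonneg fun σ _ => Finset.sum_nonneg fun x _ => ?_)
  exact add_nonneg (mul_nonneg (min_gw_nonneg _ _) (sq_nonneg _))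
    (mul_nonneg (min_gw_nonneg _ _) (sq_nonneg _))

lemma dirForm_comp_le (f : Cfg L → ℝ) (φ : ℝ → ℝ) (K : ℝ) (hK : 0 ≤ K)
    (hφ : ∀ a b : ℝ, |φ a - φ b| ≤ K * |a - b|) :
    dirForm L h β (fun σ => φ (f σ)) ≤ K ^ 2 * dirForm L h β f := by
  have key : ∀ a b : ℝ, (φ a - φ b) ^ 2 ≤ K ^ 2 * (a - b) ^ 2 := by
    intro a b
    calc (φ a - φ b) ^ 2 = |φ a - φ b| ^ 2 := (sq_abs _).symm
      _ ≤ (K * |a - b|) ^ 2 := by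
          apply pow_le_pow_left₀ (abs_nonneg _) (hφ a b) 2
      _ = K ^ 2 * (a - b) ^ 2 := by rw [mul_pow, sq_abs]
  unfold dirForm
  rw [mul_left_comm]
  refine mul_le_mul_of_nonneg_left ?_ (by norm_num : (0:ℝ) ≤ 1/2)
  rw [Finset.mul_sum]
  refine Finset.sum_le_sum fun σ _ => ?_
  rw [Finset.mul_sum]
  refine Finset.sum_le_sum fun x _ => ?_
  rw [mul_add]
  refine add_le_add ?_ ?_ <;>
    · rw [mul_left_comm]
      exact mul_le_mul_of_nonneg_left (key _ _) (min_gw_nonneg _ _)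

/-- The set of values of the Dirichlet form over admissible functions. -/
def capaSet (L : ℕ) [NeZero L] (h β : ℝ) (A B : Set (Cfg L)) : Set ℝ :=
  { e : ℝ | ∃ f : Cfg L → ℝ, (∀ σ, 0 ≤ f σ ∧ f σ ≤ 1) ∧
        (∀ σ ∈ A, f σ = 1) ∧ (∀ σ ∈ B, f σ = 0) ∧ e = dirForm L h β f }

lemma capa_eq_sInf (A B : Set (Cfg L)) : capa L h β A B = sInf (capaSet L h β A B) := rfl

lemma capaSet_bddBelow (A B : Set (Cfg L)) : BddBelow (capaSet L h β A B) := by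
  refine ⟨0, ?_⟩
  rintro e ⟨f, -, -, -, rfl⟩
  exact dirForm_nonneg f

lemma capa_le_dirForm {A B : Set (Cfg L)} (f : Cfg L → ℝ)
    (hf1 : ∀ σ, 0 ≤ f σ ∧ f σ ≤ 1) (hfA : ∀ σ ∈ A, f σ = 1) (hfB : ∀ σ ∈ B, f σ = 0) :
    capa L h β A B ≤ dirForm L h β f :=
  csInf_le (capaSet_bddBelow A B) ⟨f, hf1, hfA, hfB, rfl⟩

lemma le_capa {A B : Set (Cfg L)} (hne : (capaSet L h β A B).Nonempty) (c : ℝ)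
    (hc : ∀ f : Cfg L → ℝ, (∀ σ, 0 ≤ f σ ∧ f σ ≤ 1) → (∀ σ ∈ A, f σ = 1) →
      (∀ σ ∈ B, f σ = 0) → c ≤ dirForm L h β f) :
    c ≤ capa L h β A B := by
  refine le_csInf hne ?_
  rintro e ⟨f, h1, h2, h3, rfl⟩
  exact hc f h1 h2 h3

lemma capa_mono {A B B' : Set (Cfg L)} (hBB : B ⊆ B')
    (hne : (capaSet L h β A B').Nonempty) :
    capa L h β A B ≤ capa L h β A B' := by
  refine csInf_le_csInf (capaSet_bddBelow A B) hne ?_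
  rintro e ⟨f, h1, h2, h3, rfl⟩
  exact ⟨f, h1, h2, fun σ hσ => h3 σ (hBB hσ), rfl⟩

lemma abs_min_sub_min (a b c : ℝ) : |min a c - min b c| ≤ |a - b| := by
  have h1 := le_abs_self (a - b)
  have h2 := neg_abs_le (a - b)
  simp only [min_def]
  split_ifs <;> rw [abs_le] <;> constructor <;> linarith

lemma abs_max_sub_max (a b : ℝ) : |max a 0 - max b 0| ≤ |a - b| := by
  have h1 := le_abs_self (a - b)
  have h2 := neg_abs_le (a - b)
  simp only [max_def]
  split_ifs <;> rw [abs_le] <;> constructor <;> linarith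

end BCProof
namespace BCProof
open BC Finset

variable {L : ℕ} [NeZero L] {h β : ℝ}

lemma gw_le_of_ham_ge {σ : Cfg L} {E : ℝ} (hβ : 0 ≤ β) (hham : E ≤ ham L h σ) :
    gw L h β σ ≤ Real.exp (-β * E) := by
  unfold gw
  apply Real.exp_le_exp.mpr
  nlinarith

lemma le_gw_of_ham_le {σ : Cfg L} {E : ℝ} (hβ : 0 ≤ β) (hham : ham L h σ ≤ E) :
    Real.exp (-β * E) ≤ gw L h β σ := by
  unfold gw
  apply Real.exp_le_exp.mpr
  nlinarith

/-- Lower bound on the Dirichlet form via a path of single (up-)spin-flips. -/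
lemma dirForm_path_lb (f : Cfg L → ℝ) (n : ℕ) (hn : 0 < n) (E : ℝ) (hβ : 0 ≤ β)
    (π : ℕ → Cfg L) (xs : ℕ → Site L)
    (hflip : ∀ k < n, π (k + 1) = flipUp L (π k) (xs k))
    (hinj : ∀ k < n, ∀ l < n, π k = π l → k = l)
    (hE : ∀ k ≤ n, ham L h (π k) ≤ E)
    (hf0 : f (π 0) = 1) (hfn : f (π n) = 0) :
    Real.exp (-β * E) / (2 * n) ≤ dirForm L h β f := by
  set F : Cfg L × Site L → ℝ := fun p =>
    min (gw L h β p.1) (gw L h β (flipUp L p.1 p.2)) * (f (flipUp L p.1 p.2) - f p.1) ^ 2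
    with hF
  have hFnn : ∀ p, 0 ≤ F p := fun p => mul_nonneg (min_gw_nonneg _ _) (sq_nonneg _)
  -- the path sum is dominated by twice the Dirichlet form
  have hsum : ∑ k ∈ Finset.range n, F (π k, xs k) ≤ 2 * dirForm L h β f := by
    have hinj' : ∀ k ∈ Finset.range n, ∀ l ∈ Finset.range n,
        ((π k, xs k) : Cfg L × Site L) = (π l, xs l) → k = l := by
      intro k hk l hl hkl
      exact hinj k (Finset.mem_range.mp hk) l (Finset.mem_range.mp hl)
        (congrArg Prod.fst hkl)
    have h1 : ∑ k ∈ Finset.range n, F (π k, xs k)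
        = ∑ p ∈ (Finset.range n).image (fun k => ((π k, xs k) : Cfg L × Site L)), F p :=
      (Finset.sum_image hinj').symm
    rw [h1]
    have h2 : ∑ p ∈ (Finset.range n).image (fun k => ((π k, xs k) : Cfg L × Site L)), F p
        ≤ ∑ p : Cfg L × Site L, F p :=
      Finset.sum_le_sum_of_subset_of_nonneg (Finset.subset_univ _) (fun p _ _ => hFnn p)
    refine h2.trans ?_
    have h3 : (∑ p : Cfg L × Site L, F p) = ∑ σ : Cfg L, ∑ x : Site L, F (σ, x) :=
      Fintype.sum_prod_type F
    have h4 : 2 * dirForm L h β f = ∑ σ : Cfg L, ∑ x : Site L,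
        (min (gw L h β σ) (gw L h β (flipUp L σ x)) * (f (flipUp L σ x) - f σ) ^ 2 +
         min (gw L h β σ) (gw L h β (flipDown L σ x)) * (f (flipDown L σ x) - f σ) ^ 2) := by
      unfold dirForm; ring
    rw [h3, h4]
    refine Finset.sum_le_sum fun σ _ => Finset.sum_le_sum fun x _ => ?_
    exact le_add_of_nonneg_right (mul_nonneg (min_gw_nonneg _ _) (sq_nonneg _))
  -- telescoping and Cauchy–Schwarz
  have tel : (1 : ℝ) = ∑ k ∈ Finset.range n, (f (π k) - f (π (k + 1))) := by
    rw [Finset.sum_range_sub' (fun k => f (π k)) n, hf0, hfn]; ring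
  have cs : (1 : ℝ) ≤ n * ∑ k ∈ Finset.range n, (f (π k) - f (π (k + 1))) ^ 2 := by
    calc (1 : ℝ) = (∑ k ∈ Finset.range n, (f (π k) - f (π (k + 1)))) ^ 2 := by
          rw [← tel]; norm_num
      _ ≤ (Finset.range n).card * ∑ k ∈ Finset.range n, (f (π k) - f (π (k + 1))) ^ 2 :=
          sq_sum_le_card_mul_sum_sq
      _ = n * ∑ k ∈ Finset.range n, (f (π k) - f (π (k + 1))) ^ 2 := by
          rw [Finset.card_range]
  -- each step is controlled by the corresponding edge term
  have step : ∀ k ∈ Finset.range n,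
      (f (π k) - f (π (k + 1))) ^ 2 ≤ Real.exp (β * E) * F (π k, xs k) := by
    intro k hk
    have hk' := Finset.mem_range.mp hk
    have hfl := hflip k hk'
    have hw : Real.exp (-β * E) ≤ min (gw L h β (π k)) (gw L h β (flipUp L (π k) (xs k))) := by
      rw [← hfl]
      exact le_min (le_gw_of_ham_le hβ (hE k hk'.le)) (le_gw_of_ham_le hβ (hE (k+1) hk'))
    have hsq : (f (π k) - f (π (k + 1))) ^ 2 = (f (flipUp L (π k) (xs k)) - f (π k)) ^ 2 := by
      rw [← hfl]; ring
    have hmul : Real.exp (-β * E) * (f (flipUp L (π k) (xs k)) - f (π k)) ^ 2 ≤ F (π k, xs k) :=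
      mul_le_mul_of_nonneg_right hw (sq_nonneg _)
    have hid : Real.exp (β * E) * Real.exp (-β * E) = 1 := by
      rw [← Real.exp_add]; norm_num
    calc (f (π k) - f (π (k + 1))) ^ 2
        = Real.exp (β * E) * (Real.exp (-β * E) * (f (flipUp L (π k) (xs k)) - f (π k)) ^ 2) := by
          rw [← mul_assoc, hid, one_mul, hsq]
      _ ≤ Real.exp (β * E) * F (π k, xs k) :=
          mul_le_mul_of_nonneg_left hmul (Real.exp_pos _).le
  have sum_step : ∑ k ∈ Finset.range n, (f (π k) - f (π (k + 1))) ^ 2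
      ≤ Real.exp (β * E) * ∑ k ∈ Finset.range n, F (π k, xs k) := by
    rw [Finset.mul_sum]
    exact Finset.sum_le_sum step
  -- combine
  have hnpos : (0 : ℝ) < n := by exact_mod_cast hn
  have hexp : (0 : ℝ) < Real.exp (β * E) := Real.exp_pos _
  have h1 : (1 : ℝ) ≤ n * (Real.exp (β * E) * (2 * dirForm L h β f)) := by
    calc (1 : ℝ) ≤ n * ∑ k ∈ Finset.range n, (f (π k) - f (π (k + 1))) ^ 2 := cs
      _ ≤ n * (Real.exp (β * E) * ∑ k ∈ Finset.range n, F (π k, xs k)) := by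
          exact mul_le_mul_of_nonneg_left sum_step hnpos.le
      _ ≤ n * (Real.exp (β * E) * (2 * dirForm L h β f)) := by
          refine mul_le_mul_of_nonneg_left ?_ hnpos.le
          exact mul_le_mul_of_nonneg_left hsum hexp.le
  have hid : Real.exp (-β * E) * Real.exp (β * E) = 1 := by
    rw [← Real.exp_add]; norm_num
  rw [div_le_iff₀ (by positivity)]
  nlinarith [Real.exp_pos (-β * E), dirForm_nonneg (L := L) (h := h) (β := β) f]
end BCProof
namespace BCProof
open BC Finset

variable {L : ℕ} [NeZero L] {h β : ℝ}

lemma val_natCast_self (a : ZMod L) : ((a.val : ℕ) : ZMod L) = a := by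
  simp [ZMod.natCast_val, ZMod.cast_id]

lemma val_add_one (hL : 1 < L) (i : ZMod L) : (i + 1).val = (i.val + 1) % L := by
  rw [ZMod.val_add, ZMod.val_one_eq_one_mod, Nat.mod_eq_of_lt hL]

/-- Around a discrete cycle, the indicator of a downward-closed predicate of the value
changes at most twice. -/
lemma cycle_count (hL : 1 < L) (P : ℕ → Prop) [DecidablePred P]
    (hP : ∀ v w : ℕ, v ≤ w → P w → P v) :
    (Finset.univ.filter (fun i : ZMod L => ¬ (P ((i + 1 : ZMod L)).val ↔ P i.val))).card ≤ 2 := by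
  set M := ((Finset.range L).filter P).card with hM
  have key : ∀ v, v < L → (P v ↔ v < M) := by
    intro v hv
    constructor
    · intro hPv
      have hsub : Finset.range (v + 1) ⊆ (Finset.range L).filter P := by
        intro w hw
        have hw' := Finset.mem_range.mp hw
        refine Finset.mem_filter.mpr ⟨Finset.mem_range.mpr (by omega), ?_⟩
        exact hP w v (by omega) hPv
      have := Finset.card_le_card hsub
      rw [Finset.card_range] at this
      omega
    · intro hvM
      by_contra hnP
      have hsub : (Finset.range L).filter P ⊆ Finset.range v := by
        intro w hw
        obtain ⟨-, hPw⟩ := Finset.mem_filter.mp hw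
        refine Finset.mem_range.mpr ?_
        by_contra hwv
        exact hnP (hP v w (by omega) hPw)
      have := Finset.card_le_card hsub
      rw [Finset.card_range] at this
      omega
  have hsub : (Finset.univ.filter (fun i : ZMod L => ¬ (P ((i + 1 : ZMod L)).val ↔ P i.val)))
      ⊆ {((M - 1 : ℕ) : ZMod L), ((L - 1 : ℕ) : ZMod L)} := by
    intro i hi
    have hcond := (Finset.mem_filter.mp hi).2
    have hval : i.val < L := ZMod.val_lt i
    rw [val_add_one hL] at hcond
    by_cases hiv : i.val = L - 1
    · refine Finset.mem_insert.mpr (Or.inr (Finset.mem_singleton.mpr ?_))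
      rw [← val_natCast_self i, hiv]
    · have h1 : i.val + 1 < L := by omega
      rw [Nat.mod_eq_of_lt h1, key _ h1, key _ hval] at hcond
      refine Finset.mem_insert.mpr (Or.inl ?_)
      rw [← val_natCast_self i]
      congr 1
      omega
  calc _ ≤ ({((M - 1 : ℕ) : ZMod L), ((L - 1 : ℕ) : ZMod L)} : Finset (ZMod L)).card :=
        Finset.card_le_card hsub
    _ ≤ 2 := (Finset.card_insert_le _ _).trans (by simp)

/-- Lexicographic index of a site. -/
def idxS (L : ℕ) [NeZero L] (x : Site L) : ℕ := x.2.val * L + x.1.val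

/-- The threshold configuration: value `a` on the first `k` sites, `b` on the rest. -/
def thCfg (L : ℕ) [NeZero L] (a b : Fin 3) (k : ℕ) : Cfg L :=
  fun x => if idxS L x < k then a else b

/-- The site with lexicographic index `k`. -/
def stk (L : ℕ) (k : ℕ) : Site L := (((k % L : ℕ) : ZMod L), ((k / L : ℕ) : ZMod L))

lemma Lpos : 0 < L := Nat.pos_of_ne_zero (NeZero.ne L)

lemma idxS_lt (x : Site L) : idxS L x < L ^ 2 := by
  have h1 := ZMod.val_lt x.1
  have h2 := ZMod.val_lt x.2
  unfold idxS
  have : x.2.val * L + x.1.val < (x.2.val + 1) * L := by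
    rw [add_mul, one_mul]; omega
  have h3 : (x.2.val + 1) * L ≤ L * L := Nat.mul_le_mul_right L (by omega)
  rw [pow_two]
  omega

lemma idxS_stk {k : ℕ} (hk : k < L ^ 2) : idxS L (stk L k) = k := by
  have hL := Lpos (L := L)
  have h1 : k % L < L := Nat.mod_lt _ hL
  have h2 : k / L < L := by
    rw [Nat.div_lt_iff_lt_mul hL]
    rw [pow_two] at hk
    omega
  unfold idxS stk
  simp only
  rw [ZMod.val_cast_of_lt h1, ZMod.val_cast_of_lt h2]
  have := Nat.div_add_mod k L
  have hmc : L * (k / L) = (k / L) * L := Nat.mul_comm _ _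
  omega

lemma idxS_inj {x y : Site L} (hxy : idxS L x = idxS L y) : x = y := by
  have h1 := ZMod.val_lt x.1
  have h2 := ZMod.val_lt y.1
  unfold idxS at hxy
  have e1 : x.1.val = y.1.val := by
    have m1 : (x.2.val * L + x.1.val) % L = x.1.val := by
      rw [Nat.add_comm, Nat.add_mul_mod_self_right, Nat.mod_eq_of_lt h1]
    have m2 : (y.2.val * L + y.1.val) % L = y.1.val := by
      rw [Nat.add_comm, Nat.add_mul_mod_self_right, Nat.mod_eq_of_lt h2]
    rw [← m1, ← m2, hxy]
  have e2 : x.2.val = y.2.val := by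
    have hL := Lpos (L := L)
    nlinarith [hxy, e1]
  have p1 : x.1 = y.1 := by rw [← val_natCast_self x.1, ← val_natCast_self y.1, e1]
  have p2 : x.2 = y.2 := by rw [← val_natCast_self x.2, ← val_natCast_self y.2, e2]
  exact Prod.ext p1 p2

lemma thCfg_step {a b : Fin 3} (hab : b + 1 = a) {k : ℕ} (hk : k < L ^ 2) :
    thCfg L a b (k + 1) = flipUp L (thCfg L a b k) (stk L k) := by
  funext x
  unfold flipUp
  rcases eq_or_ne x (stk L k) with rfl | hx
  · rw [Function.update_self]
    have hb : thCfg L a b k (stk L k) = b := by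
      unfold thCfg
      rw [if_neg (by rw [idxS_stk hk]; omega)]
    rw [hb, hab]
    unfold thCfg
    rw [if_pos (by rw [idxS_stk hk]; omega)]
  · rw [Function.update_of_ne hx]
    unfold thCfg
    have hne : idxS L x ≠ k := by
      intro hc
      exact hx (idxS_inj (by rw [hc, idxS_stk hk]))
    by_cases h2 : idxS L x < k
    · rw [if_pos (by omega), if_pos h2]
    · rw [if_neg (by omega), if_neg h2]

lemma thCfg_zero (a b : Fin 3) : thCfg L a b 0 = fun _ => b := by
  funext x; unfold thCfg; rw [if_neg (by omega)]

lemma thCfg_full (a b : Fin 3) : thCfg L a b (L ^ 2) = fun _ => a := by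
  funext x; unfold thCfg; rw [if_pos (idxS_lt x)]

lemma thCfg_at_stk (a b : Fin 3) {k : ℕ} (hk : k < L ^ 2) : thCfg L a b k (stk L k) = b := by
  unfold thCfg; rw [if_neg (by rw [idxS_stk hk]; omega)]

lemma thCfg_inj {a b : Fin 3} (hab : a ≠ b) {k l : ℕ} (hk : k ≤ L ^ 2) (hl : l ≤ L ^ 2)
    (he : thCfg L a b k = thCfg L a b l) : k = l := by
  by_contra hne
  rcases Nat.lt_or_ge k l with hlt | hge
  · have hkL : k < L ^ 2 := by omega
    have h1 : thCfg L a b k (stk L k) = b := thCfg_at_stk a b hkL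
    have h2 : thCfg L a b l (stk L k) = a := by
      unfold thCfg; rw [if_pos (by rw [idxS_stk hkL]; omega)]
    rw [he, h2] at h1
    exact hab h1
  · have hlt : l < k := by omega
    have hlL : l < L ^ 2 := by omega
    have h1 : thCfg L a b l (stk L l) = b := thCfg_at_stk a b hlL
    have h2 : thCfg L a b k (stk L l) = a := by
      unfold thCfg; rw [if_pos (by rw [idxS_stk hlL]; omega)]
    rw [← he, h2] at h1
    exact hab h1

end BCProof
namespace BCProof
open BC Finset

variable {L : ℕ} [NeZero L] {h β : ℝ}

lemma sval_twoone : ((sval 2 : ℝ) - (sval 1 : ℝ)) ^ 2 ≤ 1 := by norm_num [sval]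

lemma sval_onezero : ((sval 1 : ℝ) - (sval 0 : ℝ)) ^ 2 ≤ 1 := by norm_num [sval]

lemma sval_ge_neg_one (s : Fin 3) : (-1 : ℝ) ≤ (sval s : ℝ) := by
  have : (-1 : ℤ) ≤ sval s := by revert s; decide
  exact_mod_cast this

lemma sval_nonneg {s : Fin 3} (hs : s ≠ 0) : (0 : ℝ) ≤ (sval s : ℝ) := by
  have : (0 : ℤ) ≤ sval s := by revert hs; revert s; decide
  exact_mod_cast this

lemma card_site : Fintype.card (Site L) = L ^ 2 := by
  rw [Fintype.card_prod, ZMod.card]; ring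

lemma field_lb (σ : Cfg L) : -((L : ℝ) ^ 2) ≤ ∑ x : Site L, (sval (σ x) : ℝ) := by
  calc -((L : ℝ) ^ 2) = ∑ _x : Site L, (-1 : ℝ) := by
        rw [Finset.sum_const, Finset.card_univ, card_site]
        push_cast; ring
    _ ≤ _ := Finset.sum_le_sum fun x _ => sval_ge_neg_one _

lemma field_nonneg (σ : Cfg L) (hσ : ∀ x, σ x ≠ 0) :
    0 ≤ ∑ x : Site L, (sval (σ x) : ℝ) :=
  Finset.sum_nonneg fun x _ => sval_nonneg (hσ x)

lemma bond_le {a b : Fin 3} (hab : ((sval a : ℝ) - (sval b : ℝ)) ^ 2 ≤ 1) (k : ℕ)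
    (x y : Site L) :
    ((sval (thCfg L a b k y) : ℝ) - (sval (thCfg L a b k x) : ℝ)) ^ 2
      ≤ if (idxS L y < k ↔ idxS L x < k) then 0 else 1 := by
  unfold thCfg
  by_cases h1 : idxS L y < k <;> by_cases h2 : idxS L x < k
  · rw [if_pos h1, if_pos h2, if_pos (iff_of_true h1 h2)]; simp
  · rw [if_pos h1, if_neg h2, if_neg (by tauto)]; exact hab
  · rw [if_neg h1, if_pos h2, if_neg (by tauto)]; nlinarith [hab]
  · rw [if_neg h1, if_neg h2, if_pos (iff_of_false h1 h2)]; simp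

lemma row_count (hL : 1 < L) (P : ℕ → Prop) [DecidablePred P]
    (hP : ∀ v w : ℕ, v ≤ w → P w → P v) :
    ∑ i : ZMod L, (if (P ((i + 1 : ZMod L)).val ↔ P i.val) then (0 : ℝ) else 1) ≤ 2 := by
  have he : ∀ i : ZMod L, (if (P ((i + 1 : ZMod L)).val ↔ P i.val) then (0 : ℝ) else 1)
      = (if ¬ (P ((i + 1 : ZMod L)).val ↔ P i.val) then (1 : ℝ) else 0) := by
    intro i; by_cases hc : (P ((i + 1 : ZMod L)).val ↔ P i.val) <;> simp [hc]
  rw [Finset.sum_congr rfl (fun i _ => he i), Finset.sum_boole]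
  exact_mod_cast cycle_count hL P hP

lemma inter_th_le (hL : 1 < L) {a b : Fin 3}
    (hab : ((sval a : ℝ) - (sval b : ℝ)) ^ 2 ≤ 1) (k : ℕ) :
    ∑ x : Site L,
      (((sval (thCfg L a b k (x + (1, 0))) : ℝ) - (sval (thCfg L a b k x) : ℝ)) ^ 2 +
       ((sval (thCfg L a b k (x + (0, 1))) : ℝ) - (sval (thCfg L a b k x) : ℝ)) ^ 2)
      ≤ 4 * L := by
  have hcard : (Finset.univ : Finset (ZMod L)).card = L := by
    rw [Finset.card_univ, ZMod.card]
  have hH : ∑ x : Site L,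
      ((sval (thCfg L a b k (x + (1, 0))) : ℝ) - (sval (thCfg L a b k x) : ℝ)) ^ 2 ≤ 2 * L := by
    calc ∑ x : Site L, ((sval (thCfg L a b k (x + (1, 0))) : ℝ) - (sval (thCfg L a b k x) : ℝ)) ^ 2
        ≤ ∑ x : Site L, (if (idxS L (x + (1, 0)) < k ↔ idxS L x < k) then (0 : ℝ) else 1) :=
          Finset.sum_le_sum fun x _ => bond_le hab k x (x + (1, 0))
      _ = ∑ i : ZMod L, ∑ j : ZMod L,
            (if (idxS L ((i, j) + (1, 0)) < k ↔ idxS L (i, j) < k) then (0 : ℝ) else 1) :=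
          Fintype.sum_prod_type _
      _ = ∑ j : ZMod L, ∑ i : ZMod L,
            (if (idxS L ((i, j) + (1, 0)) < k ↔ idxS L (i, j) < k) then (0 : ℝ) else 1) :=
          Finset.sum_comm
      _ ≤ ∑ _j : ZMod L, (2 : ℝ) := by
          refine Finset.sum_le_sum fun j _ => ?_
          have hstep : ∀ i : ZMod L,
              (if (idxS L ((i, j) + (1, 0)) < k ↔ idxS L (i, j) < k) then (0 : ℝ) else 1)
              = (if ((fun v => j.val * L + v < k) ((i + 1 : ZMod L)).val
                    ↔ (fun v => j.val * L + v < k) i.val) then (0 : ℝ) else 1) := by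
            intro i; simp only [Prod.mk_add_mk, add_zero, zero_add, idxS]
          rw [Finset.sum_congr rfl (fun i _ => hstep i)]
          exact row_count hL (fun v => j.val * L + v < k) (fun v w hvw hw => by omega)
      _ = 2 * L := by rw [Finset.sum_const, hcard]; push_cast; ring
  have hV : ∑ x : Site L,
      ((sval (thCfg L a b k (x + (0, 1))) : ℝ) - (sval (thCfg L a b k x) : ℝ)) ^ 2 ≤ 2 * L := by
    calc ∑ x : Site L, ((sval (thCfg L a b k (x + (0, 1))) : ℝ) - (sval (thCfg L a b k x) : ℝ)) ^ 2
        ≤ ∑ x : Site L, (if (idxS L (x + (0, 1)) < k ↔ idxS L x < k) then (0 : ℝ) else 1) :=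
          Finset.sum_le_sum fun x _ => bond_le hab k x (x + (0, 1))
      _ = ∑ i : ZMod L, ∑ j : ZMod L,
            (if (idxS L ((i, j) + (0, 1)) < k ↔ idxS L (i, j) < k) then (0 : ℝ) else 1) :=
          Fintype.sum_prod_type _
      _ ≤ ∑ _i : ZMod L, (2 : ℝ) := by
          refine Finset.sum_le_sum fun i _ => ?_
          have hstep : ∀ j : ZMod L,
              (if (idxS L ((i, j) + (0, 1)) < k ↔ idxS L (i, j) < k) then (0 : ℝ) else 1)
              = (if ((fun v => v * L + i.val < k) ((j + 1 : ZMod L)).val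
                    ↔ (fun v => v * L + i.val < k) j.val) then (0 : ℝ) else 1) := by
            intro j; simp only [Prod.mk_add_mk, add_zero, zero_add, idxS]
          rw [Finset.sum_congr rfl (fun j _ => hstep j)]
          refine row_count hL (fun v => v * L + i.val < k) (fun v w hvw hw => ?_)
          have := Nat.mul_le_mul_right L hvw
          omega
      _ = 2 * L := by rw [Finset.sum_const, hcard]; push_cast; ring
  calc _ = (∑ x : Site L, ((sval (thCfg L a b k (x + (1, 0))) : ℝ) - (sval (thCfg L a b k x) : ℝ)) ^ 2)
        + ∑ x : Site L, ((sval (thCfg L a b k (x + (0, 1))) : ℝ) - (sval (thCfg L a b k x) : ℝ)) ^ 2 :=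
        Finset.sum_add_distrib
    _ ≤ 2 * L + 2 * L := add_le_add hH hV
    _ = 4 * L := by ring

lemma ham_th21_le (hh : 0 ≤ h) (hL : 1 < L) (k : ℕ) :
    ham L h (thCfg L 2 1 k) ≤ 4 * L := by
  have h1 := inter_th_le (L := L) hL sval_twoone k
  have h2 : 0 ≤ ∑ x : Site L, (sval (thCfg L 2 1 k x) : ℝ) := by
    refine field_nonneg _ fun x => ?_
    unfold thCfg; split_ifs <;> decide
  have h3 : 0 ≤ h * ∑ x : Site L, (sval (thCfg L 2 1 k x) : ℝ) := mul_nonneg hh h2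
  unfold ham
  linarith

lemma ham_th10_le (hh : 0 ≤ h) (hL : 1 < L) (k : ℕ) :
    ham L h (thCfg L 1 0 k) ≤ 4 * L + h * L ^ 2 := by
  have h1 := inter_th_le (L := L) hL sval_onezero k
  have h2 := field_lb (thCfg L 1 0 k)
  have h3 : -(h * (L : ℝ) ^ 2) ≤ h * ∑ x : Site L, (sval (thCfg L 1 0 k x) : ℝ) := by
    have := mul_le_mul_of_nonneg_left h2 hh
    nlinarith
  unfold ham
  linarith

end BCProof
namespace BCProof
open BC Finset

variable {L : ℕ} [NeZero L] {h β : ℝ}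

lemma flipUp_ne (σ : Cfg L) (x : Site L) : flipUp L σ x ≠ σ := by
  intro hc
  have := congrFun hc x
  rw [flipUp, Function.update_self] at this
  have : ∀ t : Fin 3, t + 1 ≠ t := by decide
  exact this (σ x) (by
    have h2 := congrFun hc x
    rw [flipUp, Function.update_self] at h2
    exact h2)

lemma flipDown_ne (σ : Cfg L) (x : Site L) : flipDown L σ x ≠ σ := by
  intro hc
  have h2 := congrFun hc x
  rw [flipDown, Function.update_self] at h2
  have h3 : ∀ t : Fin 3, t - 1 ≠ t := by decide
  exact h3 (σ x) h2

lemma flipDown_flipUp (σ : Cfg L) (x : Site L) : flipDown L (flipUp L σ x) x = σ := by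
  unfold flipUp flipDown
  rw [Function.update_self, Function.update_idem, add_sub_cancel_right,
    Function.update_eq_self]

lemma flipUp_flipDown (σ : Cfg L) (x : Site L) : flipUp L (flipDown L σ x) x = σ := by
  unfold flipUp flipDown
  rw [Function.update_self, Function.update_idem, sub_add_cancel,
    Function.update_eq_self]

lemma flipUp_cminus (x : Site L) : flipUp L (cminus L) x = Function.update (cminus L) x 1 := by
  unfold flipUp cminus
  rfl

lemma flipDown_cminus (x : Site L) :
    flipDown L (cminus L) x = Function.update (cminus L) x 2 := by
  unfold flipDown cminus
  rfl

lemma one_ne_zero_zmod (hL : 1 < L) : (1 : ZMod L) ≠ 0 := by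
  haveI : Fact (1 < L) := ⟨hL⟩
  exact one_ne_zero

lemma add_e1_ne (hL : 1 < L) (x : Site L) : x + ((1 : ZMod L), (0 : ZMod L)) ≠ x := by
  intro hc
  have h1 : x.1 + 1 = x.1 := congrArg Prod.fst hc
  exact one_ne_zero_zmod hL (by
    have := add_eq_left.mp h1
    exact this)

lemma add_e2_ne (hL : 1 < L) (x : Site L) : x + ((0 : ZMod L), (1 : ZMod L)) ≠ x := by
  intro hc
  have h1 : x.2 + 1 = x.2 := congrArg Prod.snd hc
  exact one_ne_zero_zmod hL (add_eq_left.mp h1)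

lemma sub_e1_ne (hL : 1 < L) (x : Site L) : x - ((1 : ZMod L), (0 : ZMod L)) ≠ x := by
  intro hc
  have h1 : x.1 - 1 = x.1 := congrArg Prod.fst hc
  have h2 : (1 : ZMod L) = 0 := by
    have := sub_eq_self.mp h1
    exact this
  exact one_ne_zero_zmod hL h2

lemma sub_e2_ne (hL : 1 < L) (x : Site L) : x - ((0 : ZMod L), (1 : ZMod L)) ≠ x := by
  intro hc
  have h1 : x.2 - 1 = x.2 := congrArg Prod.snd hc
  exact one_ne_zero_zmod hL (sub_eq_self.mp h1)

/-- Energy of a single defect (spin `1` or `2`) in the sea of `-1` spins. -/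
lemma ham_defect_ge (hh0 : 0 < h) (hh1 : h < 1) (hL : 1 < L) (x : Site L) {s : Fin 3}
    (hs : s ≠ 0) :
    4 - h + h * (L : ℝ) ^ 2 ≤ ham L h (Function.update (cminus L) x s) := by
  set σ := Function.update (cminus L) x s with hσ
  have hLpos : (0 : ℝ) < L := by positivity
  have hL2 : (1 : ℝ) ≤ (L : ℝ) ^ 2 := by
    have : (1 : ℝ) ≤ (L : ℝ) := by exact_mod_cast hL.le
    nlinarith
  -- value lemmas
  have hvx : σ x = s := Function.update_self x s (cminus L)
  have hvne : ∀ y : Site L, y ≠ x → σ y = 0 := fun y hy => Function.update_of_ne hy s (cminus L)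
  -- field
  have hfield : ∑ y : Site L, (sval (σ y) : ℝ) = (sval s : ℝ) - ((L : ℝ) ^ 2 - 1) := by
    rw [← Finset.sum_erase_add _ _ (Finset.mem_univ x)]
    have hcongr : ∀ y ∈ Finset.univ.erase x, (sval (σ y) : ℝ) = -1 := by
      intro y hy
      rw [hvne y (Finset.mem_erase.mp hy).1]
      norm_num [sval]
    rw [Finset.sum_congr rfl hcongr, Finset.sum_const,
      Finset.card_erase_of_mem (Finset.mem_univ x), Finset.card_univ, card_site, hvx]
    have h1 : (1 : ℕ) ≤ L ^ 2 := Nat.one_le_iff_ne_zero.mpr (by positivity)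
    rw [nsmul_eq_mul, Nat.cast_sub h1]
    push_cast
    ring
  -- interaction lower bound via the four bonds at x
  set t1 : Site L → ℝ := fun y => ((sval (σ (y + (1, 0))) : ℝ) - (sval (σ y) : ℝ)) ^ 2 with ht1
  set t2 : Site L → ℝ := fun y => ((sval (σ (y + (0, 1))) : ℝ) - (sval (σ y) : ℝ)) ^ 2 with ht2
  have hham : ham L h σ = (∑ y : Site L, (t1 y + t2 y)) - h * ∑ y : Site L, (sval (σ y) : ℝ) := rfl
  have htnn : ∀ y : Site L, 0 ≤ t1 y + t2 y := fun y => add_nonneg (sq_nonneg _) (sq_nonneg _)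
  have hd1 : x - ((1 : ZMod L), (0 : ZMod L)) ≠ x := sub_e1_ne hL x
  have hd2 : x - ((0 : ZMod L), (1 : ZMod L)) ≠ x := sub_e2_ne hL x
  have hd12 : x - ((1 : ZMod L), (0 : ZMod L)) ≠ x - ((0 : ZMod L), (1 : ZMod L)) := by
    intro hc
    have h1 : x.2 - 0 = x.2 - 1 := congrArg Prod.snd hc
    rw [sub_zero] at h1
    exact one_ne_zero_zmod hL (by
      have := sub_eq_self.mp h1.symm
      exact this)
  have hset : ∑ y ∈ ({x, x - ((1 : ZMod L), (0 : ZMod L)), x - ((0 : ZMod L), (1 : ZMod L))} :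
      Finset (Site L)), (t1 y + t2 y) ≤ ∑ y : Site L, (t1 y + t2 y) :=
    Finset.sum_le_sum_of_subset_of_nonneg (Finset.subset_univ _) (fun y _ _ => htnn y)
  have hexp : ∑ y ∈ ({x, x - ((1 : ZMod L), (0 : ZMod L)), x - ((0 : ZMod L), (1 : ZMod L))} :
      Finset (Site L)), (t1 y + t2 y)
      = (t1 x + t2 x) + ((t1 (x - ((1 : ZMod L), (0 : ZMod L))) + t2 (x - ((1 : ZMod L), (0 : ZMod L))))
        + (t1 (x - ((0 : ZMod L), (1 : ZMod L))) + t2 (x - ((0 : ZMod L), (1 : ZMod L))))) := by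
    rw [Finset.sum_insert (by simp [hd1.symm, hd2.symm]),
      Finset.sum_insert (by simp [hd12]), Finset.sum_singleton]
  -- evaluate the four bonds
  have hb1 : t1 x = ((sval s : ℝ) + 1) ^ 2 := by
    rw [ht1]
    simp only
    rw [hvne (x + (1, 0)) (add_e1_ne hL x), hvx]
    have hz : (sval 0 : ℝ) = -1 := by norm_num [sval]
    rw [hz]
    ring
  have hb2 : t2 x = ((sval s : ℝ) + 1) ^ 2 := by
    rw [ht2]
    simp only
    rw [hvne (x + (0, 1)) (add_e2_ne hL x), hvx]
    have hz : (sval 0 : ℝ) = -1 := by norm_num [sval]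
    rw [hz]
    ring
  have hb3 : t1 (x - ((1 : ZMod L), (0 : ZMod L))) = ((sval s : ℝ) + 1) ^ 2 := by
    rw [ht1]
    simp only
    rw [sub_add_cancel, hvne _ hd1, hvx]
    have hz : (sval 0 : ℝ) = -1 := by norm_num [sval]
    rw [hz]
    ring
  have hb4 : t2 (x - ((0 : ZMod L), (1 : ZMod L))) = ((sval s : ℝ) + 1) ^ 2 := by
    rw [ht2]
    simp only
    rw [sub_add_cancel, hvne _ hd2, hvx]
    have hz : (sval 0 : ℝ) = -1 := by norm_num [sval]
    rw [hz]
    ring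
  have hb5 : 0 ≤ t2 (x - ((1 : ZMod L), (0 : ZMod L))) := sq_nonneg _
  have hb6 : 0 ≤ t1 (x - ((0 : ZMod L), (1 : ZMod L))) := sq_nonneg _
  have hinter : 4 * ((sval s : ℝ) + 1) ^ 2 ≤ ∑ y : Site L, (t1 y + t2 y) := by
    refine le_trans ?_ hset
    rw [hexp, hb1, hb2, hb3, hb4]
    nlinarith [hb5, hb6]
  have hsv : (sval s : ℝ) = 0 ∨ (sval s : ℝ) = 1 := by
    have h3 : s.val < 3 := s.isLt
    have h4 : s.val ≠ 0 := fun hc => hs (Fin.ext hc)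
    have h5 : (s : ℤ) = (s.val : ℤ) := rfl
    have h6 : sval s = 0 ∨ sval s = 1 := by unfold sval; omega
    rcases h6 with h6 | h6 <;> [left; right] <;> rw [h6] <;> norm_num
  rw [hham, hfield]
  rcases hsv with hsv | hsv <;> rw [hsv] at hinter ⊢ <;> nlinarith

end BCProof
namespace BCProof
open BC Finset

variable {L : ℕ} [NeZero L] {h β : ℝ}

/-- Indicator function of the configuration `-1`. -/
def chi (L : ℕ) [NeZero L] : Cfg L → ℝ := fun σ => if σ = cminus L then 1 else 0

lemma chi_bounds (σ : Cfg L) : 0 ≤ chi L σ ∧ chi L σ ≤ 1 := by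
  unfold chi; split_ifs <;> norm_num

lemma chi_cminus : chi L (cminus L) = 1 := if_pos rfl

lemma chi_ne {σ : Cfg L} (hσ : σ ≠ cminus L) : chi L σ = 0 := if_neg hσ

lemma czero_ne_cminus : czero L ≠ cminus L := by
  intro hc
  have h1 : (1 : Fin 3) = 0 := congrFun hc ((0 : ZMod L), (0 : ZMod L))
  exact absurd h1 (by decide)

lemma cplus_ne_cminus : cplus L ≠ cminus L := by
  intro hc
  have h1 : (2 : Fin 3) = 0 := congrFun hc ((0 : ZMod L), (0 : ZMod L))
  exact absurd h1 (by decide)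

lemma chi_sq_le (σ τ : Cfg L) : (chi L τ - chi L σ) ^ 2 ≤ chi L τ + chi L σ := by
  unfold chi; split_ifs <;> norm_num

lemma dirForm_chi_le (hh0 : 0 < h) (hh1 : h < 1) (hL : 1 < L) (hβ : 0 ≤ β) :
    dirForm L h β (chi L) ≤ 2 * L ^ 2 * Real.exp (-β * (4 - h + h * L ^ 2)) := by
  set e0 : ℝ := Real.exp (-β * (4 - h + h * L ^ 2)) with he0
  have he0pos : 0 < e0 := Real.exp_pos _
  -- energy of neighbours of cminus
  have hdef : ∀ (x : Site L) (s : Fin 3), s ≠ 0 →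
      gw L h β (Function.update (cminus L) x s) ≤ e0 :=
    fun x s hs => gw_le_of_ham_ge hβ (ham_defect_ge hh0 hh1 hL x hs)
  -- the four partial sums
  have key : ∀ (σ : Cfg L) (x : Site L) (τ : Cfg L), (τ = flipUp L σ x ∨ τ = flipDown L σ x) →
      min (gw L h β σ) (gw L h β τ) * (chi L τ - chi L σ) ^ 2
        ≤ (if σ = cminus L then e0 else 0) + (if τ = cminus L then e0 else 0) := by
    intro σ x τ hτ
    have hτσ : τ ≠ σ := by
      rcases hτ with rfl | rfl
      · exact flipUp_ne σ x
      · exact flipDown_ne σ x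
    by_cases h1 : σ = cminus L
    · subst h1
      have h2 : τ ≠ cminus L := hτσ
      rw [if_pos rfl, if_neg h2]
      have hτe : gw L h β τ ≤ e0 := by
        rcases hτ with rfl | rfl
        · rw [flipUp_cminus]; exact hdef x 1 (by decide)
        · rw [flipDown_cminus]; exact hdef x 2 (by decide)
      have : min (gw L h β (cminus L)) (gw L h β τ) ≤ e0 := (min_le_right _ _).trans hτe
      calc min (gw L h β (cminus L)) (gw L h β τ) * (chi L τ - chi L (cminus L)) ^ 2
          ≤ e0 * 1 := by
            refine mul_le_mul this ?_ (sq_nonneg _) he0pos.le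
            rw [chi_ne h2, chi_cminus]; norm_num
        _ = e0 + 0 := by ring
    · by_cases h2 : τ = cminus L
      · rw [if_neg h1, if_pos h2]
        have hσval : gw L h β σ ≤ e0 := by
          rcases hτ with hτ' | hτ'
          · -- flipUp σ x = cminus, so σ = flipDown cminus x
            have : σ = flipDown L (cminus L) x := by
              rw [← h2, hτ', flipDown_flipUp]
            rw [this, flipDown_cminus]
            exact hdef x 2 (by decide)
          · have : σ = flipUp L (cminus L) x := by
              rw [← h2, hτ', flipUp_flipDown]
            rw [this, flipUp_cminus]
            exact hdef x 1 (by decide)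
        have : min (gw L h β σ) (gw L h β τ) ≤ e0 := (min_le_left _ _).trans hσval
        calc min (gw L h β σ) (gw L h β τ) * (chi L τ - chi L σ) ^ 2
            ≤ e0 * 1 := by
              refine mul_le_mul this ?_ (sq_nonneg _) he0pos.le
              rw [chi_ne h1, h2, chi_cminus]
              norm_num
          _ = 0 + e0 := by ring
      · rw [if_neg h1, if_neg h2, chi_ne h1, chi_ne h2]
        simp
  -- sum the bound
  have hcount1 : ∀ x : Site L,
      ∑ σ : Cfg L, (if σ = cminus L then e0 else 0) = e0 := by
    intro x
    rw [Finset.sum_ite_eq' Finset.univ (cminus L) (fun _ => e0)]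
    simp
  have hcount2 : ∀ x : Site L,
      ∑ σ : Cfg L, (if flipUp L σ x = cminus L then e0 else 0) ≤ e0 := by
    intro x
    rw [Finset.sum_ite, Finset.sum_const, Finset.sum_const_zero, add_zero]
    have hcard : (Finset.univ.filter (fun σ : Cfg L => flipUp L σ x = cminus L)).card ≤ 1 := by
      refine Finset.card_le_one.mpr ?_
      intro a ha b hb
      have ha' := (Finset.mem_filter.mp ha).2
      have hb' := (Finset.mem_filter.mp hb).2
      rw [← flipDown_flipUp a x, ha', ← hb', flipDown_flipUp]
    calc ((Finset.univ.filter (fun σ : Cfg L => flipUp L σ x = cminus L)).card : ℕ) • e0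
        ≤ 1 • e0 := smul_le_smul_of_nonneg_right hcard he0pos.le
      _ = e0 := one_smul _ _
  have hcount3 : ∀ x : Site L,
      ∑ σ : Cfg L, (if flipDown L σ x = cminus L then e0 else 0) ≤ e0 := by
    intro x
    rw [Finset.sum_ite, Finset.sum_const, Finset.sum_const_zero, add_zero]
    have hcard : (Finset.univ.filter (fun σ : Cfg L => flipDown L σ x = cminus L)).card ≤ 1 := by
      refine Finset.card_le_one.mpr ?_
      intro a ha b hb
      have ha' := (Finset.mem_filter.mp ha).2
      have hb' := (Finset.mem_filter.mp hb).2
      rw [← flipUp_flipDown a x, ha', ← hb', flipUp_flipDown]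
    calc ((Finset.univ.filter (fun σ : Cfg L => flipDown L σ x = cminus L)).card : ℕ) • e0
        ≤ 1 • e0 := smul_le_smul_of_nonneg_right hcard he0pos.le
      _ = e0 := one_smul _ _
  have hmain : ∑ σ : Cfg L, ∑ x : Site L,
      (min (gw L h β σ) (gw L h β (flipUp L σ x)) * (chi L (flipUp L σ x) - chi L σ) ^ 2 +
       min (gw L h β σ) (gw L h β (flipDown L σ x)) * (chi L (flipDown L σ x) - chi L σ) ^ 2)
      ≤ 4 * L ^ 2 * e0 := by
    have hstep : ∀ (σ : Cfg L) (x : Site L),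
        (min (gw L h β σ) (gw L h β (flipUp L σ x)) * (chi L (flipUp L σ x) - chi L σ) ^ 2 +
         min (gw L h β σ) (gw L h β (flipDown L σ x)) * (chi L (flipDown L σ x) - chi L σ) ^ 2)
        ≤ ((if σ = cminus L then e0 else 0) + (if flipUp L σ x = cminus L then e0 else 0)) +
          ((if σ = cminus L then e0 else 0) + (if flipDown L σ x = cminus L then e0 else 0)) :=
      fun σ x => add_le_add (key σ x _ (Or.inl rfl)) (key σ x _ (Or.inr rfl))
    calc ∑ σ : Cfg L, ∑ x : Site L, _
        ≤ ∑ σ : Cfg L, ∑ x : Site L,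
          (((if σ = cminus L then e0 else 0) + (if flipUp L σ x = cminus L then e0 else 0)) +
           ((if σ = cminus L then e0 else 0) + (if flipDown L σ x = cminus L then e0 else 0))) :=
          Finset.sum_le_sum fun σ _ => Finset.sum_le_sum fun x _ => hstep σ x
      _ = (∑ x : Site L, ∑ σ : Cfg L, (if σ = cminus L then e0 else 0)) +
          (∑ x : Site L, ∑ σ : Cfg L, (if flipUp L σ x = cminus L then e0 else 0)) +
          ((∑ x : Site L, ∑ σ : Cfg L, (if σ = cminus L then e0 else 0)) +
           (∑ x : Site L, ∑ σ : Cfg L, (if flipDown L σ x = cminus L then e0 else 0))) := by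
          rw [Finset.sum_comm (f := fun σ (x : Site L) =>
            (((if σ = cminus L then e0 else 0) + (if flipUp L σ x = cminus L then e0 else 0)) +
             ((if σ = cminus L then e0 else 0) + (if flipDown L σ x = cminus L then e0 else 0))))]
          simp only [Finset.sum_add_distrib]
      _ ≤ (∑ _x : Site L, e0) + (∑ _x : Site L, e0) + ((∑ _x : Site L, e0) + (∑ _x : Site L, e0)) := by
          refine add_le_add (add_le_add ?_ ?_) (add_le_add ?_ ?_) <;>
            refine Finset.sum_le_sum fun x _ => ?_
          · exact le_of_eq (hcount1 x)
          · exact hcount2 x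
          · exact le_of_eq (hcount1 x)
          · exact hcount3 x
      _ = 4 * L ^ 2 * e0 := by
          rw [Finset.sum_const, Finset.card_univ, card_site, nsmul_eq_mul]
          push_cast
          ring
  calc dirForm L h β (chi L)
      = (1 / 2) * ∑ σ : Cfg L, ∑ x : Site L,
        (min (gw L h β σ) (gw L h β (flipUp L σ x)) * (chi L (flipUp L σ x) - chi L σ) ^ 2 +
         min (gw L h β σ) (gw L h β (flipDown L σ x)) * (chi L (flipDown L σ x) - chi L σ) ^ 2) := rfl
    _ ≤ (1 / 2) * (4 * L ^ 2 * e0) := by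
        refine mul_le_mul_of_nonneg_left hmain (by norm_num)
    _ = 2 * L ^ 2 * e0 := by ring

end BCProof
namespace BCProof
open BC Finset

variable {L : ℕ} [NeZero L] {h β : ℝ}

lemma Lsq_pos : 0 < L ^ 2 := by
  have := Lpos (L := L); positivity

/-- Lower bound for the Dirichlet form of a function separating `0` and `+1`. -/
lemma dirForm_lb_phase2 (hh0 : 0 ≤ h) (hL : 1 < L) (hβ : 0 ≤ β) (f : Cfg L → ℝ)
    (hf0 : f (czero L) = 1) (hf1 : f (cplus L) = 0) :
    Real.exp (-β * (4 * L)) / (2 * (L : ℝ) ^ 2) ≤ dirForm L h β f := by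
  have key := dirForm_path_lb (L := L) (h := h) (β := β) f (L ^ 2) Lsq_pos (4 * L) hβ
    (fun k => thCfg L 2 1 k) (fun k => stk L k)
    (fun k hk => thCfg_step (by decide) hk)
    (fun k hk l hl he => thCfg_inj (by decide) hk.le hl.le he)
    (fun k _ => ham_th21_le hh0 hL k)
    (by show f (thCfg L 2 1 0) = 1; rw [thCfg_zero]; exact hf0)
    (by show f (thCfg L 2 1 (L ^ 2)) = 0; rw [thCfg_full]; exact hf1)
  have hcast : (2 * ((L ^ 2 : ℕ) : ℝ)) = 2 * (L : ℝ) ^ 2 := by push_cast; ring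
  rwa [hcast] at key

/-- The combined path from `-1` to `+1` through `0`. -/
def pathC (L : ℕ) [NeZero L] (k : ℕ) : Cfg L :=
  if k < L ^ 2 then thCfg L 1 0 k else thCfg L 2 1 (k - L ^ 2)

def pathX (L : ℕ) (k : ℕ) : Site L :=
  if k < L ^ 2 then stk L k else stk L (k - L ^ 2)

lemma pathC_flip {k : ℕ} (hk : k < 2 * L ^ 2) :
    pathC L (k + 1) = flipUp L (pathC L k) (pathX L k) := by
  by_cases h1 : k < L ^ 2
  · have hstep : thCfg L 1 0 (k + 1) = flipUp L (thCfg L 1 0 k) (stk L k) :=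
      thCfg_step (by decide) h1
    unfold pathC pathX
    by_cases h2 : k + 1 < L ^ 2
    · rw [if_pos h2, if_pos h1, if_pos h1]
      exact hstep
    · rw [if_neg h2, if_pos h1, if_pos h1]
      have h3 : k + 1 = L ^ 2 := by omega
      rw [← hstep, h3, Nat.sub_self, thCfg_zero, thCfg_full]
  · have h2 : k - L ^ 2 < L ^ 2 := by omega
    have h3 : ¬ (k + 1 < L ^ 2) := by omega
    unfold pathC pathX
    rw [if_neg h3, if_neg h1, if_neg h1]
    have h4 : k + 1 - L ^ 2 = (k - L ^ 2) + 1 := by omega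
    rw [h4]
    exact thCfg_step (by decide) h2

lemma pathC_inj {k l : ℕ} (hk : k < 2 * L ^ 2) (hl : l < 2 * L ^ 2)
    (he : pathC L k = pathC L l) : k = l := by
  unfold pathC at he
  by_cases h1 : k < L ^ 2 <;> by_cases h2 : l < L ^ 2
  · rw [if_pos h1, if_pos h2] at he
    exact thCfg_inj (by decide) h1.le h2.le he
  · rw [if_pos h1, if_neg h2] at he
    exfalso
    have ha : thCfg L 1 0 k (stk L k) = 0 := thCfg_at_stk _ _ h1
    have hb : thCfg L 2 1 (l - L ^ 2) (stk L k) ≠ 0 := by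
      unfold thCfg; split_ifs <;> decide
    rw [he] at ha
    exact hb ha
  · rw [if_neg h1, if_pos h2] at he
    exfalso
    have ha : thCfg L 1 0 l (stk L l) = 0 := thCfg_at_stk _ _ h2
    have hb : thCfg L 2 1 (k - L ^ 2) (stk L l) ≠ 0 := by
      unfold thCfg; split_ifs <;> decide
    rw [← he] at ha
    exact hb ha
  · rw [if_neg h1, if_neg h2] at he
    have := thCfg_inj (show (2 : Fin 3) ≠ 1 by decide)
      (show k - L ^ 2 ≤ L ^ 2 by omega) (show l - L ^ 2 ≤ L ^ 2 by omega) he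
    omega

lemma pathC_zero : pathC L 0 = cminus L := by
  unfold pathC
  rw [if_pos Lsq_pos, thCfg_zero]
  rfl

lemma pathC_end : pathC L (2 * L ^ 2) = cplus L := by
  unfold pathC
  rw [if_neg (by omega : ¬ 2 * L ^ 2 < L ^ 2)]
  have : 2 * L ^ 2 - L ^ 2 = L ^ 2 := by omega
  rw [this, thCfg_full]
  rfl

lemma pathC_ham_le (hh0 : 0 ≤ h) (hL : 1 < L) (k : ℕ) :
    ham L h (pathC L k) ≤ 4 * L + h * L ^ 2 := by
  unfold pathC
  have hLsq : (0 : ℝ) ≤ h * (L : ℝ) ^ 2 := by positivity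
  by_cases h1 : k < L ^ 2
  · rw [if_pos h1]
    exact ham_th10_le hh0 hL k
  · rw [if_neg h1]
    have := ham_th21_le hh0 hL (k - L ^ 2)
    linarith

/-- Lower bound for the Dirichlet form of a function separating `-1` and `+1`. -/
lemma dirForm_lb_full (hh0 : 0 ≤ h) (hL : 1 < L) (hβ : 0 ≤ β) (f : Cfg L → ℝ)
    (hfm : f (cminus L) = 1) (hfp : f (cplus L) = 0) :
    Real.exp (-β * (4 * L + h * L ^ 2)) / (4 * (L : ℝ) ^ 2) ≤ dirForm L h β f := by
  have key := dirForm_path_lb (L := L) (h := h) (β := β) f (2 * L ^ 2)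
    (by have := Lsq_pos (L := L); omega) (4 * L + h * L ^ 2) hβ
    (fun k => pathC L k) (fun k => pathX L k)
    (fun k hk => pathC_flip hk)
    (fun k hk l hl he => pathC_inj hk hl he)
    (fun k _ => pathC_ham_le hh0 hL k)
    (by show f (pathC L 0) = 1; rw [pathC_zero]; exact hfm)
    (by show f (pathC L (2 * L ^ 2)) = 0; rw [pathC_end]; exact hfp)
  have hcast : (2 * ((2 * L ^ 2 : ℕ) : ℝ)) = 4 * (L : ℝ) ^ 2 := by push_cast; ring
  rwa [hcast] at key

end BCProof
namespace BCProof
open BC Finset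

set_option maxHeartbeats 2000000 in
/-- The main quantitative bounds on the capacity ratio, for a fixed inverse temperature. -/
lemma main_bounds (L : ℕ) [NeZero L] (h β : ℝ) (h0 : 0 < h) (h1 : h < 1)
    (hβ : 1 ≤ β) (hLh : 4 + 2 * h < h * L)
    (hq : 8 * (L : ℝ) ^ 4 * Real.exp (-(12 : ℝ) * β) < 1 / 4) :
    capa L h β {cminus L} {cplus L} / capa L h β {cminus L} {czero L, cplus L} ≤ 1 ∧
    (1 - Real.sqrt (8 * (L : ℝ) ^ 4 * Real.exp (-(12 : ℝ) * β))) ^ 2 / (1 + Real.exp (-β))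
      ≤ capa L h β {cminus L} {cplus L} / capa L h β {cminus L} {czero L, cplus L} := by
  have hβ0 : (0 : ℝ) ≤ β := le_trans zero_le_one hβ
  have hLr4 : (4 : ℝ) < L := by
    nlinarith [mul_le_mul_of_nonneg_right h1.le (Nat.cast_nonneg L)]
  have hL1 : 1 < L := by exact_mod_cast (by linarith : (1 : ℝ) < L)
  have hLr : (0 : ℝ) < L := by linarith
  have hLr1 : (1 : ℝ) ≤ (L : ℝ) ^ 2 := by nlinarith
  set q : ℝ := 8 * (L : ℝ) ^ 4 * Real.exp (-(12 : ℝ) * β) with hqdef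
  have hqpos : 0 < q := by positivity
  set U : ℝ := 2 * (L : ℝ) ^ 2 * Real.exp (-β * (4 - h + h * L ^ 2)) with hUdef
  set W : ℝ := Real.exp (-β * (4 * L + h * L ^ 2)) / (4 * (L : ℝ) ^ 2) with hWdef
  set V : ℝ := Real.exp (-β * (4 * L)) / (2 * (L : ℝ) ^ 2) with hVdef
  have hUpos : 0 < U := by positivity
  have hWpos : 0 < W := by positivity
  have hVpos : 0 < V := by positivity
  set cap1 : ℝ := capa L h β {cminus L} {cplus L} with hcap1def
  set cap2 : ℝ := capa L h β {cminus L} {czero L, cplus L} with hcap2def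
  -- chi is admissible for both problems
  have hchiA : ∀ σ ∈ ({cminus L} : Set (Cfg L)), chi L σ = 1 := by
    rintro σ hσ
    rw [Set.mem_singleton_iff] at hσ
    rw [hσ, chi_cminus]
  have hchiB1 : ∀ σ ∈ ({cplus L} : Set (Cfg L)), chi L σ = 0 := by
    rintro σ hσ
    rw [Set.mem_singleton_iff] at hσ
    rw [hσ]; exact chi_ne cplus_ne_cminus
  have hchiB2 : ∀ σ ∈ ({czero L, cplus L} : Set (Cfg L)), chi L σ = 0 := by
    rintro σ hσ
    rcases hσ with hσ | hσ
    · rw [hσ]; exact chi_ne czero_ne_cminus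
    · rw [hσ]; exact chi_ne cplus_ne_cminus
  have hne1 : (capaSet L h β {cminus L} {cplus L}).Nonempty :=
    ⟨_, chi L, chi_bounds, hchiA, hchiB1, rfl⟩
  have hne2 : (capaSet L h β {cminus L} {czero L, cplus L}).Nonempty :=
    ⟨_, chi L, chi_bounds, hchiA, hchiB2, rfl⟩
  -- basic capacity bounds
  have hcap1_le_U : cap1 ≤ U :=
    (capa_le_dirForm (chi L) chi_bounds hchiA hchiB1).trans (dirForm_chi_le h0 h1 hL1 hβ0)
  have hW_le_cap1 : W ≤ cap1 := by
    refine le_capa hne1 W ?_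
    intro f hf hfA hfB
    exact dirForm_lb_full h0.le hL1 hβ0 f (hfA _ rfl) (hfB _ rfl)
  have hcap1pos : 0 < cap1 := lt_of_lt_of_le hWpos hW_le_cap1
  have hcap12 : cap1 ≤ cap2 :=
    capa_mono (fun σ hσ => Set.mem_insert_of_mem _ hσ) hne2
  have hcap2pos : 0 < cap2 := lt_of_lt_of_le hcap1pos hcap12
  -- a near-minimizer for cap1
  have hηpos : 0 < W * Real.exp (-β) := by positivity
  obtain ⟨e, he, hlt⟩ := Real.lt_sInf_add_pos hne1 hηpos
  obtain ⟨f, hf01, hfA, hfB, rfl⟩ := he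
  rw [← capa_eq_sInf] at hlt
  set c : ℝ := f (czero L) with hcdef
  have hc0 : 0 ≤ c := (hf01 _).1
  have hc1 : c ≤ 1 := (hf01 _).2
  have hfm : f (cminus L) = 1 := hfA _ rfl
  have hfp : f (cplus L) = 0 := hfB _ rfl
  have hexpβ : Real.exp (-β) ≤ 1 := by
    rw [← Real.exp_zero]
    exact Real.exp_le_exp.mpr (by linarith)
  have hWU : W ≤ U := by
    have e1 : Real.exp (-β * (4 * L + h * L ^ 2)) ≤ Real.exp (-β * (4 - h + h * L ^ 2)) := by
      apply Real.exp_le_exp.mpr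
      have e2 : (4 : ℝ) - h ≤ 4 * L := by nlinarith
      nlinarith [mul_le_mul_of_nonneg_left e2 hβ0]
    have e3 : W ≤ Real.exp (-β * (4 * L + h * L ^ 2)) := by
      rw [hWdef, div_le_iff₀ (by positivity : (0 : ℝ) < 4 * (L : ℝ) ^ 2)]
      nlinarith [mul_nonneg (Real.exp_pos (-β * (4 * L + h * L ^ 2))).le
        (by linarith : (0:ℝ) ≤ 4 * (L : ℝ) ^ 2 - 1)]
    have e4 : Real.exp (-β * (4 - h + h * L ^ 2)) ≤ U := by
      rw [hUdef]
      nlinarith [mul_nonneg (Real.exp_pos (-β * (4 - h + h * L ^ 2))).le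
        (by linarith : (0:ℝ) ≤ 2 * (L : ℝ) ^ 2 - 1)]
    exact e3.trans (e1.trans e4)
  have hdf2U : dirForm L h β f ≤ 2 * U := by
    have e1 : W * Real.exp (-β) ≤ W := by
      calc W * Real.exp (-β) ≤ W * 1 := mul_le_mul_of_nonneg_left hexpβ hWpos.le
        _ = W := mul_one _
    linarith [hlt, hcap1_le_U, hWU]
  -- bound on c² via the capacity between 0 and +1
  have hcsqV : c ^ 2 * V ≤ 2 * U := by
    rcases eq_or_lt_of_le hc0 with hc' | hc'
    · rw [← hc']
      have : (0:ℝ) ^ 2 * V = 0 := by ring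
      rw [this]
      positivity
    · set u : Cfg L → ℝ := fun σ => min (f σ / c) 1 with hudef
      have hlip : ∀ a b : ℝ, |min (a / c) 1 - min (b / c) 1| ≤ (1 / c) * |a - b| := by
        intro a b
        calc |min (a / c) 1 - min (b / c) 1| ≤ |a / c - b / c| := abs_min_sub_min _ _ _
          _ = (1 / c) * |a - b| := by
              rw [div_sub_div_same, abs_div, abs_of_pos hc']
              ring
      have hD : dirForm L h β u ≤ (1 / c) ^ 2 * dirForm L h β f :=
        dirForm_comp_le f (fun t => min (t / c) 1) (1 / c) (by positivity) hlip
      have hu0 : u (czero L) = 1 := by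
        rw [hudef]
        simp only
        rw [← hcdef, div_self (ne_of_gt hc'), min_self]
      have hup : u (cplus L) = 0 := by
        rw [hudef]
        simp only
        rw [hfp, zero_div]
        exact min_eq_left zero_le_one
      have hVu : V ≤ dirForm L h β u := dirForm_lb_phase2 h0.le hL1 hβ0 u hu0 hup
      have hchain : V ≤ (1 / c) ^ 2 * (2 * U) := by
        refine hVu.trans (hD.trans ?_)
        exact mul_le_mul_of_nonneg_left hdf2U (by positivity)
      calc c ^ 2 * V ≤ c ^ 2 * ((1 / c) ^ 2 * (2 * U)) :=
            mul_le_mul_of_nonneg_left hchain (by positivity)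
        _ = 2 * U := by field_simp
  have hc2q : c ^ 2 ≤ q := by
    have h2UqV : 2 * U ≤ q * V := by
      have hkey : 12 + 4 * (L : ℝ) ≤ 4 - h + h * (L : ℝ) ^ 2 := by
        nlinarith [mul_lt_mul_of_pos_right hLh hLr, hLh, h0, hLr4]
      have hexple : Real.exp (-β * (4 - h + h * L ^ 2))
          ≤ Real.exp (-(12 : ℝ) * β) * Real.exp (-β * (4 * L)) := by
        rw [← Real.exp_add]
        apply Real.exp_le_exp.mpr
        nlinarith [mul_le_mul_of_nonneg_left hkey hβ0]
      have hqV : q * V = 4 * (L : ℝ) ^ 2 *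
          (Real.exp (-(12 : ℝ) * β) * Real.exp (-β * (4 * L))) := by
        rw [hqdef, hVdef]
        field_simp
        ring
      rw [hqV, hUdef]
      nlinarith [mul_le_mul_of_nonneg_left hexple
        (by positivity : (0:ℝ) ≤ 4 * (L : ℝ) ^ 2)]
    have := hcsqV.trans h2UqV
    exact le_of_mul_le_mul_right this hVpos
  have hcsqrt : c ≤ Real.sqrt q := by
    rw [show c = Real.sqrt (c ^ 2) from (Real.sqrt_sq hc0).symm]
    exact Real.sqrt_le_sqrt hc2q
  have hsq12 : Real.sqrt q < 1 / 2 := by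
    have e1 : Real.sqrt q < Real.sqrt (1 / 4) := by
      exact (Real.sqrt_lt_sqrt hqpos.le hq)
    rw [show (1 : ℝ) / 4 = (1 / 2) ^ 2 by norm_num, Real.sqrt_sq (by norm_num : (0:ℝ) ≤ 1/2)] at e1
    exact e1
  have hc12 : c < 1 / 2 := lt_of_le_of_lt hcsqrt hsq12
  have h1c : 0 < 1 - c := by linarith
  -- the modified test function for cap2
  set g : Cfg L → ℝ := fun σ => max ((f σ - c) / (1 - c)) 0 with hgdef
  have hglip : ∀ a b : ℝ,
      |max ((a - c) / (1 - c)) 0 - max ((b - c) / (1 - c)) 0| ≤ (1 / (1 - c)) * |a - b| := by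
    intro a b
    calc |max ((a - c) / (1 - c)) 0 - max ((b - c) / (1 - c)) 0|
        ≤ |(a - c) / (1 - c) - (b - c) / (1 - c)| := abs_max_sub_max _ _
      _ = (1 / (1 - c)) * |a - b| := by
          rw [div_sub_div_same, show a - c - (b - c) = a - b by ring, abs_div,
            abs_of_pos h1c]
          ring
  have hDg : dirForm L h β g ≤ (1 / (1 - c)) ^ 2 * dirForm L h β f :=
    dirForm_comp_le f (fun t => max ((t - c) / (1 - c)) 0) (1 / (1 - c)) (by positivity) hglip
  have hgb : ∀ σ : Cfg L, 0 ≤ g σ ∧ g σ ≤ 1 := by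
    intro σ
    constructor
    · exact le_max_right _ _
    · refine max_le ?_ zero_le_one
      rw [div_le_one h1c]
      linarith [(hf01 σ).2]
  have hgA : ∀ σ ∈ ({cminus L} : Set (Cfg L)), g σ = 1 := by
    rintro σ hσ
    rw [Set.mem_singleton_iff] at hσ
    rw [hσ, hgdef]
    simp only
    rw [hfm, div_self (ne_of_gt h1c)]
    exact max_eq_left zero_le_one
  have hgB : ∀ σ ∈ ({czero L, cplus L} : Set (Cfg L)), g σ = 0 := by
    rintro σ hσ
    rcases hσ with hσ | hσ
    · rw [hσ, hgdef]
      simp only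
      rw [← hcdef, sub_self, zero_div]
      exact max_self 0
    · rw [hσ, hgdef]
      simp only
      rw [hfp]
      have : (0 - c) / (1 - c) ≤ 0 := by
        rw [div_nonpos_iff]
        right
        constructor <;> linarith
      exact max_eq_right this
  have hcap2_le : cap2 ≤ (1 / (1 - c)) ^ 2 * dirForm L h β f :=
    (capa_le_dirForm g hgb hgA hgB).trans hDg
  have hfinal : cap2 * (1 - c) ^ 2 ≤ cap1 * (1 + Real.exp (-β)) := by
    have e1 : cap2 * (1 - c) ^ 2 ≤ dirForm L h β f := by
      have e2 := mul_le_mul_of_nonneg_right hcap2_le (sq_nonneg (1 - c))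
      calc cap2 * (1 - c) ^ 2 ≤ (1 / (1 - c)) ^ 2 * dirForm L h β f * (1 - c) ^ 2 := e2
        _ = dirForm L h β f := by field_simp
    have e3 : W * Real.exp (-β) ≤ cap1 * Real.exp (-β) :=
      mul_le_mul_of_nonneg_right hW_le_cap1 (Real.exp_pos _).le
    nlinarith [hlt]
  constructor
  · rw [div_le_one hcap2pos]
    exact hcap12
  · rw [div_le_div_iff₀ (by positivity : (0:ℝ) < 1 + Real.exp (-β)) hcap2pos]
    have e1 : (1 - Real.sqrt q) ^ 2 ≤ (1 - c) ^ 2 := by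
      have e2 : 0 ≤ 1 - Real.sqrt q := by linarith
      have e3 : 1 - Real.sqrt q ≤ 1 - c := by linarith
      exact pow_le_pow_left₀ e2 e3 2
    calc (1 - Real.sqrt q) ^ 2 * cap2 ≤ (1 - c) ^ 2 * cap2 :=
          mul_le_mul_of_nonneg_right e1 hcap2pos.le
      _ = cap2 * (1 - c) ^ 2 := by ring
      _ ≤ cap1 * (1 + Real.exp (-β)) := hfinal

end BCProof
/-- Lemma (as64) : `cap(-1, +1) / cap(-1, {0, +1}) → 1`. -/
theorem stmt_17 (h : ℝ) (h0 : 0 < h) (h1 : h < 1)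
    (hirr : ∀ m : ℤ, (2 : ℝ) / h ≠ (m : ℝ))
    (L : ℝ → ℕ) (hL : ∀ β : ℝ, 2 * (BC.n0 h + 2) ≤ L β)
    (hlim1 : Filter.Tendsto (fun β : ℝ => (L β : ℝ) *
        (Real.exp (-(((BC.n0 h : ℝ) + 1) * h - 2) * β) + Real.exp (-h * β)))
      Filter.atTop (nhds 0))
    (hlim2 : Filter.Tendsto (fun β : ℝ => (L β : ℝ) ^ 4 * Real.exp (-(2 - h) * β))
      Filter.atTop (nhds 0)) :
    Filter.Tendsto (fun β : ℝ =>
      letI : NeZero (L β) := ⟨by have := hL β; omega⟩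
      BC.capa (L β) h β {BC.cminus (L β)} {BC.cplus (L β)} /
        BC.capa (L β) h β {BC.cminus (L β)} {BC.czero (L β), BC.cplus (L β)})
      Filter.atTop (nhds 1) := by
  have hinst : ∀ β : ℝ, NeZero (L β) := fun β => ⟨by have := hL β; omega⟩
  have hLh : ∀ β : ℝ, 4 + 2 * h < h * (L β : ℝ) := by
    intro β
    have hfl : (2 : ℝ) / h < (BC.n0 h : ℝ) + 1 := by
      unfold BC.n0
      exact Nat.lt_floor_add_one _
    have hn : (2 : ℝ) < h * ((BC.n0 h : ℝ) + 1) := by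
      rw [div_lt_iff₀ h0] at hfl
      nlinarith
    have hcastR : ((2 * (BC.n0 h + 2) : ℕ) : ℝ) ≤ (L β : ℝ) := Nat.cast_le.mpr (hL β)
    push_cast at hcastR
    nlinarith [mul_le_mul_of_nonneg_left hcastR h0.le, hn]
  -- the quantity controlling the error
  have hq : Filter.Tendsto (fun β : ℝ => 8 * (L β : ℝ) ^ 4 * Real.exp (-(12 : ℝ) * β))
      Filter.atTop (nhds 0) := by
    have hexp10 : Filter.Tendsto (fun β : ℝ => Real.exp (-(10 + h) * β))
        Filter.atTop (nhds 0) := by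
      have ha : Filter.Tendsto (fun β : ℝ => (10 + h) * β) Filter.atTop Filter.atTop :=
        Filter.Tendsto.const_mul_atTop (by linarith) Filter.tendsto_id
      have hb : Filter.Tendsto (fun β : ℝ => -(10 + h) * β) Filter.atTop Filter.atBot := by
        have hcomp := Filter.tendsto_neg_atTop_atBot.comp ha
        have heq2 : (fun β : ℝ => -(10 + h) * β) = (Neg.neg ∘ fun β : ℝ => (10 + h) * β) := by
          funext β; simp only [Function.comp_apply]; ring
        rw [heq2]
        exact hcomp
      exact Real.tendsto_exp_atBot.comp hb
    have heq : (fun β : ℝ => 8 * (L β : ℝ) ^ 4 * Real.exp (-(12 : ℝ) * β))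
        = fun β : ℝ => 8 * ((L β : ℝ) ^ 4 * Real.exp (-(2 - h) * β)) * Real.exp (-(10 + h) * β) := by
      funext β
      have hee : Real.exp (-(2 - h) * β) * Real.exp (-(10 + h) * β)
          = Real.exp (-(12 : ℝ) * β) := by
        rw [← Real.exp_add]
        congr 1
        ring
      rw [← hee]
      ring
    rw [heq]
    have := (hlim2.const_mul (8 : ℝ)).mul hexp10
    simpa using this
  have hsq : Filter.Tendsto
      (fun β : ℝ => Real.sqrt (8 * (L β : ℝ) ^ 4 * Real.exp (-(12 : ℝ) * β)))
      Filter.atTop (nhds 0) := by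
    have hcomp := (Real.continuous_sqrt.tendsto 0).comp hq
    rw [Real.sqrt_zero] at hcomp
    exact hcomp
  have hlbnum : Filter.Tendsto
      (fun β : ℝ => (1 - Real.sqrt (8 * (L β : ℝ) ^ 4 * Real.exp (-(12 : ℝ) * β))) ^ 2)
      Filter.atTop (nhds 1) := by
    have ha : Filter.Tendsto
        (fun β : ℝ => 1 - Real.sqrt (8 * (L β : ℝ) ^ 4 * Real.exp (-(12 : ℝ) * β)))
        Filter.atTop (nhds 1) := by
      simpa using (tendsto_const_nhds (x := (1:ℝ)) (f := Filter.atTop)).sub hsq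
    have := ha.pow 2
    simpa using this
  have hden : Filter.Tendsto (fun β : ℝ => 1 + Real.exp (-β)) Filter.atTop (nhds 1) := by
    simpa using (tendsto_const_nhds (x := (1:ℝ)) (f := Filter.atTop)).add
      Real.tendsto_exp_neg_atTop_nhds_zero
  have hlb : Filter.Tendsto
      (fun β : ℝ => (1 - Real.sqrt (8 * (L β : ℝ) ^ 4 * Real.exp (-(12 : ℝ) * β))) ^ 2
        / (1 + Real.exp (-β)))
      Filter.atTop (nhds 1) := by
    have := hlbnum.div hden (by norm_num); rw [div_one] at this; exact this
  have hev1 : ∀ᶠ β : ℝ in Filter.atTop, (1 : ℝ) ≤ β := Filter.eventually_ge_atTop 1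
  have hev2 : ∀ᶠ β : ℝ in Filter.atTop,
      8 * (L β : ℝ) ^ 4 * Real.exp (-(12 : ℝ) * β) < 1 / 4 :=
    hq.eventually (gt_mem_nhds (by norm_num : (0 : ℝ) < 1 / 4))
  refine tendsto_of_tendsto_of_tendsto_of_le_of_le' hlb tendsto_const_nhds ?_ ?_
  · filter_upwards [hev1, hev2] with β hβ1 hβq
    haveI : NeZero (L β) := hinst β
    exact (BCProof.main_bounds (L β) h β h0 h1 hβ1 (hLh β) hβq).2
  · filter_upwards [hev1, hev2] with β hβ1 hβq
    haveI : NeZero (L β) := hinst β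
    exact (BCProof.main_bounds (L β) h β h0 h1 hβ1 (hLh β) hβq).1
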